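/- arXiv:1411.5905 — 4 statements merged into one kernel-verified Lean document; each statement's English description precedes it below -/
import Mathlib

section
/- Let (X,⊳) be a shelf, R a commutative ring, and C_n(X) the free R-module on X^{n+1}. Define ∂^⊳ : C_n(X) → C_{n-1}(X) by ∂^⊳ = Σ_{i=0}^{n} (-1)^{n-i} d_i^⊳, where d_i^⊳(x_n,…,x_0) = (x_n⊳x_i,…,x_{i+1}⊳x_i, x_{i-1},…,x_0). Then ∂^⊳ ∘ ∂^⊳ = 0, so (C(X), ∂^⊳) is a chain complex. -/
/-- The `i`-th face map for a binary operation `op` on `X` (entries counted from the right). -/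
def face {X : Type*} (op : X → X → X) {n : ℕ} (i : Fin (n+1)) (f : Fin (n+1) → X) :
    Fin n → X :=
  fun k => if (k : ℕ) < (i : ℕ) then f k.castSucc else op (f k.succ) (f i)

/-- The one-term distributive differential `∂^⊳ = Σ_{i=0}^{n} (-1)^{n-i} d_i^⊳`
on the free `R`-module `C_n(X) = R⟨X^{n+1}⟩`. -/
noncomputable def oneTermDiff {X : Type*} (R : Type*) [CommRing R] (op : X → X → X) (n : ℕ) :
    ((Fin (n+1) → X) →₀ R) →ₗ[R] ((Fin n → X) →₀ R) :=
  ∑ i : Fin (n+1), ((-1 : R) ^ (n - (i : ℕ))) • Finsupp.lmapDomain R R (face op i)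

lemma face_face {X : Type*} (op : X → X → X)
    (hshelf : ∀ x y z : X, op (op x y) z = op (op x z) (op y z)) {n : ℕ}
    (i : Fin (n+1)) (j : Fin (n+2)) (h : (i : ℕ) < (j : ℕ)) (f : Fin (n+2) → X) :
    face op i (face op j f) =
      face op ⟨(j : ℕ) - 1, by omega⟩ (face op ⟨(i : ℕ), by omega⟩ f) := by
  funext k
  have hi := i.isLt
  have hj := j.isLt
  have hk := k.isLt
  simp only [face, Fin.coe_castSucc, Fin.val_succ]
  have ej : f j = f (Fin.succ (⟨(j : ℕ) - 1, by omega⟩ : Fin (n+1))) :=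
    congrArg f (Fin.ext (by simp [Fin.val_succ]; omega))
  have ei : f i.castSucc = f ⟨(i : ℕ), by omega⟩ := rfl
  split_ifs <;> first
    | rfl
    | omega
    | (rw [ej, ei]; apply hshelf)

lemma comp_sum' {R M N P : Type*} [CommRing R] [AddCommGroup M] [AddCommGroup N]
    [AddCommGroup P] [Module R M] [Module R N] [Module R P] {ι : Type*} (s : Finset ι)
    (f : N →ₗ[R] P) (g : ι → M →ₗ[R] N) : f ∘ₗ (∑ j ∈ s, g j) = ∑ j ∈ s, f ∘ₗ g j :=
  LinearMap.ext fun x => by simp [LinearMap.sum_apply, map_sum]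

lemma sum_comp' {R M N P : Type*} [CommRing R] [AddCommGroup M] [AddCommGroup N]
    [AddCommGroup P] [Module R M] [Module R N] [Module R P] {ι : Type*} (s : Finset ι)
    (f : ι → N →ₗ[R] P) (g : M →ₗ[R] N) : (∑ j ∈ s, f j) ∘ₗ g = ∑ j ∈ s, f j ∘ₗ g :=
  LinearMap.ext fun x => by simp [LinearMap.sum_apply]

set_option maxHeartbeats 1000000 in
/-- For a shelf `(X, ⊳)`, the one-term distributive differential squares to zero, so
`(C(X), ∂^⊳)` is a chain complex. -/
theorem oneTermDiff_squares_to_zero {X : Type*} (R : Type*) [CommRing R] (op : X → X → X)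
    (hshelf : ∀ x y z : X, op (op x y) z = op (op x z) (op y z)) (n : ℕ) :
    (oneTermDiff R op n).comp (oneTermDiff R op (n+1)) = 0 := by
  set F : Fin (n+1) × Fin (n+2) → (((Fin (n+2) → X) →₀ R) →ₗ[R] ((Fin n → X) →₀ R)) :=
    fun p => ((-1 : R) ^ (n - (p.1 : ℕ)) * (-1 : R) ^ (n + 1 - (p.2 : ℕ))) •
      Finsupp.lmapDomain R R (face op p.1 ∘ face op p.2) with hF
  have key : (oneTermDiff R op n).comp (oneTermDiff R op (n+1)) = ∑ p : Fin (n+1) × Fin (n+2), F p := by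
    rw [oneTermDiff, oneTermDiff, sum_comp', ← Finset.univ_product_univ,
      Finset.sum_product]
    refine Finset.sum_congr rfl fun i _ => ?_
    rw [LinearMap.smul_comp, comp_sum', Finset.smul_sum]
    refine Finset.sum_congr rfl fun j _ => ?_
    rw [LinearMap.comp_smul, smul_smul, hF]
    simp [Finsupp.lmapDomain_comp, mul_comm]
  rw [key]
  -- cancellation helper
  have cancel : ∀ (i : Fin (n+1)) (j : Fin (n+2)), (i : ℕ) < (j : ℕ) →
      F (i, j) + F (⟨(j : ℕ) - 1, by omega⟩, ⟨(i : ℕ), by omega⟩) = 0 := by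
    intro i j hij
    have hi := i.isLt
    have hj := j.isLt
    have hmaps : (face op i ∘ face op j : (Fin (n+2) → X) → Fin n → X) =
        face op ⟨(j : ℕ) - 1, by omega⟩ ∘ face op ⟨(i : ℕ), by omega⟩ := by
      funext f; exact face_face op hshelf i j hij f
    rw [hF]
    simp only [hmaps]
    rw [← add_smul]
    convert zero_smul R _
    have h1 : n - (i : ℕ) + (n + 1 - (j : ℕ)) + 1 =
        (n - ((j : ℕ) - 1)) + (n + 1 - (i : ℕ)) := by omega
    have : ((-1 : R) ^ (n - ((j:ℕ) - 1)) * (-1 : R) ^ (n + 1 - (i:ℕ)))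
        = -((-1 : R) ^ (n - (i:ℕ)) * (-1 : R) ^ (n + 1 - (j:ℕ))) := by
      rw [← pow_add, ← pow_add, ← h1, pow_succ]
      ring
    rw [this]; ring
  refine Finset.sum_ninvolution
    (fun p => if h : (p.1 : ℕ) < (p.2 : ℕ)
      then (⟨(p.2 : ℕ) - 1, by omega⟩, ⟨(p.1 : ℕ), by omega⟩)
      else (⟨(p.2 : ℕ), by have := p.2.isLt; have := p.1.isLt; omega⟩,
            ⟨(p.1 : ℕ) + 1, by have := p.1.isLt; omega⟩))
    (fun p => ?_) (fun p _ => ?_) (fun p => Finset.mem_univ _) (fun p => ?_)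
  · obtain ⟨⟨i, hi⟩, ⟨j, hj⟩⟩ := p
    by_cases h : i < j
    · dsimp only
      rw [dif_pos h]
      exact cancel ⟨i, hi⟩ ⟨j, hj⟩ h
    · dsimp only
      rw [dif_neg h]
      have h2 := cancel ⟨j, by omega⟩ ⟨i + 1, by omega⟩ (show j < i + 1 by omega)
      simp only [Nat.add_sub_cancel] at h2
      exact (add_comm (F (⟨i, hi⟩, ⟨j, hj⟩)) (F (⟨j, by omega⟩, ⟨i + 1, by omega⟩))).trans h2
  · obtain ⟨⟨i, hi⟩, ⟨j, hj⟩⟩ := p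
    by_cases h : i < j
    · dsimp only
      rw [dif_pos h]
      intro hc
      have h3 : i = j := congrArg (fun q : Fin (n+1) × Fin (n+2) => (q.2 : ℕ)) hc
      omega
    · dsimp only
      rw [dif_neg h]
      intro hc
      have h3 : i + 1 = j := congrArg (fun q : Fin (n+1) × Fin (n+2) => (q.2 : ℕ)) hc
      omega
  · obtain ⟨⟨i, hi⟩, ⟨j, hj⟩⟩ := p
    by_cases h : i < j
    · dsimp only
      rw [dif_pos h]
      dsimp only
      rw [dif_neg (show ¬ ((⟨j - 1, by omega⟩ : Fin (n+1)) : ℕ) < ((⟨i, by omega⟩ : Fin (n+2)) : ℕ) by simp; omega)]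
      ext <;> simp <;> omega
    · dsimp only
      rw [dif_neg h]
      dsimp only
      rw [dif_pos (show ((⟨j, by omega⟩ : Fin (n+1)) : ℕ) < ((⟨i + 1, by omega⟩ : Fin (n+2)) : ℕ) by simp; omega)]
      ext <;> simp <;> omega
end

section
/- Let a multispindle X act on an R-module M, and let CD_n(M;X) ⊂ C_n(M;X) = M ⊗ R⟨X^{n+1}⟩ be the submodule generated by elements m⊗(x_n,…,x_0) with x_i = x_{i+1} for some i. Then CD(M;X) is a subcomplex of C(M;X) with respect to any multiterm distributive differential ∂ = Σ_k a_k ∂^{⊳_k}. -/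
/-- The `i`-th face map on `C_n(M;X) ≅ (X^{n+1} →₀ M)`:
`d_i(m ⊗ 𝐱) = (m ⊳ x_i) ⊗ d_i(𝐱)`, where `β x : M →ₗ[R] M` is the action of `x`. -/
noncomputable def moduleFace {X : Type} (R : Type) [CommRing R] {M : Type}
    [AddCommGroup M] [Module R M] (op : X → X → X) (β : X → M →ₗ[R] M)
    {n : ℕ} (i : Fin (n+1)) :
    ((Fin (n+1) → X) →₀ M) →ₗ[R] ((Fin n → X) →₀ M) :=
  Finsupp.lsum R fun f => (Finsupp.lsingle (face op i f)).comp (β (f i))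

/-- The multiterm distributive differential with coefficients in `M`, with operations
`ops k`, actions `act k` and weights `a k`, on `C_m(M;X)`. -/
noncomputable def moduleDiff {X : Type} (R : Type) [CommRing R] {M : Type}
    [AddCommGroup M] [Module R M] {r : ℕ} (ops : Fin r → X → X → X)
    (act : Fin r → X → M →ₗ[R] M) (a : Fin r → R) (m : ℕ) :
    ((Fin (m+1) → X) →₀ M) →ₗ[R] ((Fin m → X) →₀ M) :=
  ∑ k, a k • ∑ i : Fin (m+1),
    ((-1 : R) ^ (m - (i : ℕ))) • moduleFace R (ops k) (act k) i

/-- The degenerate submodule `CD_n(M;X)`, generated by `m ⊗ (x_n,…,x_0)` with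
`x_i = x_{i+1}` for some `i`. -/
noncomputable def degenSub (X R : Type) [CommRing R] (M : Type) [AddCommGroup M] [Module R M]
    (n : ℕ) : Submodule R ((Fin (n+1) → X) →₀ M) :=
  Submodule.span R {g | ∃ (f : Fin (n+1) → X) (m : M),
    g = Finsupp.single f m ∧ ∃ i : Fin n, f i.castSucc = f i.succ}

lemma face_degen {X : Type} (op : X → X → X) {n : ℕ} (f : Fin (n+2) → X)
    (j : Fin (n+1)) (hj : f j.castSucc = f j.succ) (i : Fin (n+2))
    (h1 : (i:ℕ) ≠ (j:ℕ)) (h2 : (i:ℕ) ≠ (j:ℕ)+1) :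
    ∃ t : Fin n, face op i f t.castSucc = face op i f t.succ := by
  by_cases hlt : (i:ℕ) < (j:ℕ)
  · refine ⟨⟨(j:ℕ)-1, by omega⟩, ?_⟩
    simp only [face, Fin.coe_castSucc, Fin.val_succ]
    rw [if_neg (by simp; omega), if_neg (by simp; omega)]
    have e1 : (⟨(j:ℕ)-1, by omega⟩ : Fin n).castSucc.succ = j.castSucc := by
      ext; simp; omega
    have e2 : (⟨(j:ℕ)-1, by omega⟩ : Fin n).succ.succ = j.succ := by
      ext; simp; omega
    rw [e1, e2, hj]
  · have hgt : (j:ℕ)+1 < (i:ℕ) := by omega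
    have hi2 := i.isLt
    refine ⟨⟨(j:ℕ), by omega⟩, ?_⟩
    simp only [face, Fin.coe_castSucc, Fin.val_succ]
    rw [if_pos (by omega), if_pos (by omega)]
    have e1 : (⟨(j:ℕ), by omega⟩ : Fin n).castSucc.castSucc = j.castSucc := by
      ext; simp
    have e2 : (⟨(j:ℕ), by omega⟩ : Fin n).succ.castSucc = j.succ := by
      ext; simp
    rw [e1, e2, hj]

lemma face_pair_eq {X : Type} (op : X → X → X) (hid : ∀ x, op x x = x) {n : ℕ}
    (f : Fin (n+2) → X) (j : Fin (n+1)) (hj : f j.castSucc = f j.succ) :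
    face op j.castSucc f = face op j.succ f := by
  funext k
  simp only [face, Fin.coe_castSucc, Fin.val_succ]
  rcases lt_trichotomy (k:ℕ) (j:ℕ) with h|h|h
  · rw [if_pos h, if_pos (by omega)]
  · rw [if_neg (by omega), if_pos (by omega)]
    have hk1 : k.succ = j.succ := by ext; simp; omega
    have hk0 : k.castSucc = j.castSucc := by ext; simp; omega
    rw [hk1, hk0, ← hj, hid]
  · rw [if_neg (by omega), if_neg (by omega), hj]

/-- For a multispindle `X` acting on `M`, the degenerate part `CD(M;X)` is a subcomplex of
`C(M;X)` with respect to any multiterm distributive differential `∂ = Σ_k a_k ∂^{⊳_k}`. -/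
theorem degenerate_subcomplex
    {X : Type} (R : Type) [CommRing R] (M : Type) [AddCommGroup M] [Module R M]
    {r : ℕ} (ops : Fin r → X → X → X)
    (hidem : ∀ (k : Fin r) (x : X), ops k x x = x)
    (hdistr : ∀ (i j : Fin r) (x y z : X),
      ops j (ops i x y) z = ops i (ops j x z) (ops j y z))
    (act : Fin r → X → (M →ₗ[R] M))
    (hact : ∀ (i j : Fin r) (x y : X) (m : M),
      act j y (act i x m) = act i (ops j x y) (act j y m))
    (a : Fin r → R) :
    ∀ n : ℕ, Submodule.map (moduleDiff R ops act a (n+1)) (degenSub X R M (n+1))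
      ≤ degenSub X R M n := by
  intro n
  rw [Submodule.map_le_iff_le_comap]
  rw [show degenSub X R M (n+1) = Submodule.span R {g | ∃ (f : Fin (n+2) → X) (m : M),
      g = Finsupp.single f m ∧ ∃ i : Fin (n+1), f i.castSucc = f i.succ} from rfl,
    Submodule.span_le]
  rintro g ⟨f, m, rfl, j, hj⟩
  simp only [SetLike.mem_coe, Submodule.mem_comap, moduleDiff, LinearMap.sum_apply,
    LinearMap.smul_apply]
  refine Submodule.sum_mem _ fun k _ => Submodule.smul_mem _ _ ?_
  have hface : ∀ i : Fin (n+2),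
      moduleFace R (ops k) (act k) i (Finsupp.single f m)
        = Finsupp.single (face (ops k) i f) (act k (f i) m) := by
    intro i
    simp [moduleFace]
  simp only [hface]
  set T : Fin (n+2) → ((Fin (n+1) → X) →₀ M) := fun i =>
    ((-1 : R) ^ (n + 1 - (i : ℕ))) • Finsupp.single (face (ops k) i f) (act k (f i) m)
    with hT
  show ∑ i, T i ∈ degenSub X R M n
  have hne : j.succ ∈ (Finset.univ.erase j.castSucc) :=
    Finset.mem_erase.mpr ⟨by simp [Fin.ext_iff], Finset.mem_univ _⟩
  rw [← Finset.add_sum_erase _ T (Finset.mem_univ j.castSucc),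
      ← Finset.add_sum_erase _ T hne, ← add_assoc]
  have hpair : T j.castSucc + T j.succ = 0 := by
    have e1 : face (ops k) j.castSucc f = face (ops k) j.succ f :=
      face_pair_eq (ops k) (hidem k) f j hj
    have e2 : (n + 1 - ((j.castSucc : Fin (n+2)) : ℕ)) = (n - (j:ℕ)) + 1 := by
      have := j.isLt; simp; omega
    have e3 : (n + 1 - ((j.succ : Fin (n+2)) : ℕ)) = n - (j:ℕ) := by
      simp
    rw [hT]
    simp only [e1, e2, e3, hj, pow_succ]
    rw [← add_smul]
    ring_nf
    simp
  rw [hpair, zero_add]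
  refine Submodule.sum_mem _ fun i hi => ?_
  rw [Finset.mem_erase, Finset.mem_erase] at hi
  obtain ⟨hi2, hi1, -⟩ := hi
  refine Submodule.smul_mem _ _ (Submodule.subset_span ?_)
  refine ⟨face (ops k) i f, act k (f i) m, rfl, ?_⟩
  refine face_degen (ops k) f j hj i ?_ ?_
  · intro h; exact hi1 (Fin.ext (by simpa using h))
  · intro h; exact hi2 (Fin.ext (by simpa using h))
end

section
/- Let a multispindle X act on an R-module M, and for p ≥ 0 let F^p_n ⊂ CD_n(M;X) be the submodule generated by m⊗(x_n,…,x_0) with x_i = x_{i+1} for some i ≤ p. Then each F^p is a subcomplex of the degenerate complex CD(M;X) (for any multiterm distributive differential), F^p ⊆ F^{p+1}, and ⋃_p F^p = CD(M;X); i.e., the F^p form an exhaustive filtration of CD(M;X) by subcomplexes. -/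
/-- `F^p_n ⊆ CD_n(M;X)`: the submodule generated by `m ⊗ (x_n,…,x_0)` with a repetition
`x_i = x_{i+1}` for some `i ≤ p`. -/
noncomputable def filtSub (X R : Type) [CommRing R] (M : Type) [AddCommGroup M] [Module R M]
    (p n : ℕ) : Submodule R ((Fin (n+1) → X) →₀ M) :=
  Submodule.span R {g | ∃ (f : Fin (n+1) → X) (m : M),
    g = Finsupp.single f m ∧ ∃ i : Fin n, (i : ℕ) ≤ p ∧ f i.castSucc = f i.succ}

lemma face_cancel {X : Type} (op : X → X → X) (hidem : ∀ x, op x x = x)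
    {n : ℕ} (f : Fin (n+2) → X) (i : Fin (n+1)) (hrep : f i.castSucc = f i.succ) :
    face op i.castSucc f = face op i.succ f := by
  funext k
  unfold face
  simp only [Fin.coe_castSucc, Fin.val_succ]
  rcases lt_trichotomy (k : ℕ) (i : ℕ) with h | h | h
  · rw [if_pos h, if_pos (by omega)]
  · rw [if_neg (by omega), if_pos (by omega)]
    have hk : k.succ = i.succ := by ext; simp [h]
    have hk2 : k.castSucc = i.castSucc := by ext; simp [h]
    rw [hk, hk2, ← hrep, hidem]
  · rw [if_neg (by omega), if_neg (by omega), hrep]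

lemma face_repeat {X : Type} (op : X → X → X) {n p : ℕ} (f : Fin (n+2) → X)
    (i : Fin (n+1)) (hip : (i : ℕ) ≤ p) (hrep : f i.castSucc = f i.succ)
    (j : Fin (n+2)) (hj1 : (j : ℕ) ≠ (i : ℕ)) (hj2 : (j : ℕ) ≠ (i : ℕ) + 1) :
    ∃ i' : Fin n, (i' : ℕ) ≤ p ∧ face op j f i'.castSucc = face op j f i'.succ := by
  have hi : (i : ℕ) ≤ n := Nat.lt_succ_iff.mp i.isLt
  have hjn : (j : ℕ) ≤ n + 1 := Nat.lt_succ_iff.mp j.isLt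
  rcases Nat.lt_or_ge (j : ℕ) (i : ℕ) with hlt | hge
  · -- j < i : witness i - 1
    refine ⟨⟨(i : ℕ) - 1, by omega⟩, by simp; omega, ?_⟩
    unfold face
    rw [if_neg (by simp; omega), if_neg (by simp; omega)]
    have h1 : ((⟨(i : ℕ) - 1, by omega⟩ : Fin n).castSucc).succ = i.castSucc := by
      ext; simp; omega
    have h2 : ((⟨(i : ℕ) - 1, by omega⟩ : Fin n).succ).succ = i.succ := by
      ext; simp; omega
    rw [h1, h2, hrep]
  · have hgt : (i : ℕ) + 1 < (j : ℕ) := by omega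
    refine ⟨⟨(i : ℕ), by omega⟩, hip, ?_⟩
    unfold face
    rw [if_pos (by simp; omega), if_pos (by simp; omega)]
    have h1 : ((⟨(i : ℕ), by omega⟩ : Fin n).castSucc).castSucc = i.castSucc := by
      ext; simp
    have h2 : ((⟨(i : ℕ), by omega⟩ : Fin n).succ).castSucc = i.succ := by
      ext; simp
    rw [h1, h2, hrep]

/-- The submodules `F^p` form an exhaustive filtration of the degenerate complex
`CD(M;X)` by subcomplexes: each `F^p` is preserved by any multiterm distributive
differential, `F^p ⊆ F^{p+1}`, and `⋃_p F^p = CD(M;X)`. -/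
theorem filtration_of_degenerate_complex
    {X : Type} (R : Type) [CommRing R] (M : Type) [AddCommGroup M] [Module R M]
    {r : ℕ} (ops : Fin r → X → X → X)
    (hidem : ∀ (k : Fin r) (x : X), ops k x x = x)
    (hdistr : ∀ (i j : Fin r) (x y z : X),
      ops j (ops i x y) z = ops i (ops j x z) (ops j y z))
    (act : Fin r → X → (M →ₗ[R] M))
    (hact : ∀ (i j : Fin r) (x y : X) (m : M),
      act j y (act i x m) = act i (ops j x y) (act j y m))
    (a : Fin r → R) :
    (∀ p n : ℕ, Submodule.map (moduleDiff R ops act a (n+1)) (filtSub X R M p (n+1))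
        ≤ filtSub X R M p n)
    ∧ (∀ p n : ℕ, filtSub X R M p n ≤ filtSub X R M (p+1) n)
    ∧ (∀ n : ℕ, (⨆ p : ℕ, filtSub X R M p n) = degenSub X R M n) := by
  refine ⟨?_, ?_, ?_⟩
  · intro p n
    rw [Submodule.map_le_iff_le_comap]
    rw [show filtSub X R M p (n+1) = Submodule.span R {g | ∃ (f : Fin (n+2) → X) (m : M),
      g = Finsupp.single f m ∧ ∃ i : Fin (n+1), (i : ℕ) ≤ p ∧ f i.castSucc = f i.succ}
      from rfl, Submodule.span_le]
    rintro g ⟨f, m, rfl, i, hip, hrep⟩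
    simp only [SetLike.mem_coe, Submodule.mem_comap]
    have hi : (i : ℕ) ≤ n := Nat.lt_succ_iff.mp i.isLt
    simp only [moduleDiff, LinearMap.sum_apply, LinearMap.smul_apply, moduleFace,
      Finsupp.lsum_single, LinearMap.comp_apply, Finsupp.lsingle_apply]
    refine Submodule.sum_mem _ fun k _ => Submodule.smul_mem _ _ ?_
    rw [← Finset.sum_sdiff (Finset.subset_univ
      ({i.castSucc, i.succ} : Finset (Fin (n+2))))]
    refine Submodule.add_mem _ ?_ ?_
    · refine Submodule.sum_mem _ fun j hj => ?_
      simp only [Finset.mem_sdiff, Finset.mem_univ, Finset.mem_insert,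
        Finset.mem_singleton, true_and] at hj
      push_neg at hj
      have hj1 : (j : ℕ) ≠ (i : ℕ) := fun h => hj.1 (Fin.ext (by simpa using h))
      have hj2 : (j : ℕ) ≠ (i : ℕ) + 1 := fun h => hj.2 (Fin.ext (by simpa using h))
      obtain ⟨i', hi'p, heq⟩ := face_repeat (ops k) f i hip hrep j hj1 hj2
      exact Submodule.smul_mem _ _
        (Submodule.subset_span ⟨_, _, rfl, i', hi'p, heq⟩)
    · rw [Finset.sum_pair (by simp [Fin.ext_iff] : i.castSucc ≠ i.succ)]
      have hface := face_cancel (ops k) (hidem k) f i hrep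
      have hsign : ((-1 : R) ^ (n + 1 - ((i.castSucc : Fin (n+2)) : ℕ)))
          = -((-1 : R) ^ (n + 1 - ((i.succ : Fin (n+2)) : ℕ))) := by
        have h1 : n + 1 - ((i.castSucc : Fin (n+2)) : ℕ)
            = (n + 1 - ((i.succ : Fin (n+2)) : ℕ)) + 1 := by simp; omega
        rw [h1, pow_succ, mul_neg_one]
      rw [hface, hrep, hsign, neg_smul, neg_add_cancel]
      exact Submodule.zero_mem _
  · intro p n
    simp only [filtSub]
    apply Submodule.span_mono
    rintro g ⟨f, m, rfl, i, hip, hrep⟩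
    exact ⟨f, m, rfl, i, hip.trans (Nat.le_succ p), hrep⟩
  · intro n
    apply le_antisymm
    · refine iSup_le fun p => ?_
      simp only [filtSub, degenSub]
      apply Submodule.span_mono
      rintro g ⟨f, m, rfl, i, _, hrep⟩
      exact ⟨f, m, rfl, i, hrep⟩
    · rw [degenSub, Submodule.span_le]
      rintro g ⟨f, m, rfl, i, hrep⟩
      exact (le_iSup (fun p => filtSub X R M p n) (i : ℕ))
        (Submodule.subset_span ⟨f, m, rfl, i, le_refl _, hrep⟩)
end

section
/- Suppose f : E → Ē is a morphism of first-quadrant homological spectral sequences (f^{r+1} is the map induced by f^r on homology of (E^r, d^r), with d^r of bidegree (−r, r−1)). If f^2_{pq} : E^2_{pq} → Ē^2_{pq} is an isomorphism for all q ≤ N, then f^∞_{pq} : E^∞_{pq} → Ē^∞_{pq} is an isomorphism for all (p,q) with p + q = N. -/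
/-- `Hml f g` is the homology `ker g / im f` of a composable pair `A → B → C`. -/
abbrev Hml (R : Type) [CommRing R] {A B C : Type}
    [AddCommGroup A] [AddCommGroup B] [AddCommGroup C]
    [Module R A] [Module R B] [Module R C]
    (f : A →ₗ[R] B) (g : B →ₗ[R] C) : Type :=
  ↥(LinearMap.ker g) ⧸
    Submodule.comap (LinearMap.ker g).subtype (LinearMap.range f)

/-- The map induced on homology by a map `φB` of middle terms compatible with the
differentials. -/
noncomputable def HmlMap (R : Type) [CommRing R] {A B C A' B' C' : Type}
    [AddCommGroup A] [AddCommGroup B] [AddCommGroup C]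
    [AddCommGroup A'] [AddCommGroup B'] [AddCommGroup C']
    [Module R A] [Module R B] [Module R C]
    [Module R A'] [Module R B'] [Module R C']
    {f : A →ₗ[R] B} {g : B →ₗ[R] C} {f' : A' →ₗ[R] B'} {g' : B' →ₗ[R] C'}
    (φB : B →ₗ[R] B')
    (hker : ∀ x : B, g x = 0 → g' (φB x) = 0)
    (hrange : ∀ x : B, (∃ y, f y = x) → ∃ y', f' y' = φB x) :
    Hml R f g →ₗ[R] Hml R f' g' :=
  Submodule.mapQ _ _
    (φB.restrict (p := LinearMap.ker g) (q := LinearMap.ker g')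
      (fun x hx => LinearMap.mem_ker.mpr (hker x (LinearMap.mem_ker.mp hx))))
    (by
      rintro ⟨x, hxk⟩ hx
      rcases hrange x hx with ⟨y', hy'⟩
      exact ⟨y', hy'⟩)

/-- A first-quadrant homological spectral sequence of `R`-modules.  The differential on
page `r` has bidegree `(−r, r−1)`, the `(r+1)`-st page is the homology of the `r`-th one,
and the pages stabilize at each spot `(p,q)`, defining the limit terms `E∞_{pq}`. -/
structure SpecSeq (R : Type) [CommRing R] where
  E : ℕ → ℤ → ℤ → ModuleCat R
  d : ∀ (r : ℕ) (p q p' q' : ℤ), p' = p - r → q' = q + r - 1 → (E r p q →ₗ[R] E r p' q')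
  firstQuad : ∀ (r : ℕ) (p q : ℤ), p < 0 ∨ q < 0 → Subsingleton (E r p q)
  dd : ∀ (r : ℕ) (p q p' q' p'' q'' : ℤ) (h1 : p' = p - r) (h2 : q' = q + r - 1)
    (h3 : p'' = p' - r) (h4 : q'' = q' + r - 1),
    (d r p' q' p'' q'' h3 h4).comp (d r p q p' q' h1 h2) = 0
  page : ∀ (r : ℕ) (p q : ℤ),
    E (r+1) p q ≃ₗ[R]
      Hml R (d r (p + r) (q - r + 1) p q (by ring) (by ring))
            (d r p q (p - r) (q + r - 1) rfl rfl)
  Einf : ℤ → ℤ → ModuleCat R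
  stab : ∀ (r : ℕ) (p q : ℤ), p + q + 1 < (r : ℤ) → (E r p q ≃ₗ[R] Einf p q)

/-- A morphism of spectral sequences: maps of pages commuting with the differentials such
that `f^{r+1}` is the map induced by `f^r` on homology, together with the induced map on
the limit terms. -/
structure SpecSeqHom (R : Type) [CommRing R] (A B : SpecSeq R) where
  f : ∀ (r : ℕ) (p q : ℤ), A.E r p q →ₗ[R] B.E r p q
  comm : ∀ (r : ℕ) (p q p' q' : ℤ) (h1 : p' = p - r) (h2 : q' = q + r - 1),
    (B.d r p q p' q' h1 h2).comp (f r p q) = (f r p' q').comp (A.d r p q p' q' h1 h2)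
  compat : ∀ (r : ℕ) (p q : ℤ) (x : A.E (r+1) p q),
    B.page r p q (f (r+1) p q x)
      = HmlMap R (f := A.d r (p + r) (q - r + 1) p q (by ring) (by ring))
          (g := A.d r p q (p - r) (q + r - 1) rfl rfl)
          (f' := B.d r (p + r) (q - r + 1) p q (by ring) (by ring))
          (g' := B.d r p q (p - r) (q + r - 1) rfl rfl)
          (f r p q)
          (by
            intro z hz
            have := LinearMap.congr_fun
              (comm r p q (p - r) (q + r - 1) rfl rfl) z
            simpa [hz] using this)
          (by
            rintro z ⟨y, hy⟩
            refine ⟨f r (p + r) (q - r + 1) y, ?_⟩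
            have := LinearMap.congr_fun
              (comm r (p + r) (q - r + 1) p q (by ring) (by ring)) y
            rw [← hy]
            simpa using this)
          (A.page r p q x)
  finf : ∀ (p q : ℤ), A.Einf p q →ₗ[R] B.Einf p q
  finfCompat : ∀ (r : ℕ) (p q : ℤ) (h : p + q + 1 < (r : ℤ)) (x : A.E r p q),
    finf p q (A.stab r p q h x) = B.stab r p q h (f r p q x)

lemma HmlMap_injective (R : Type) [CommRing R] {A B C A' B' C' : Type}
    [AddCommGroup A] [AddCommGroup B] [AddCommGroup C]
    [AddCommGroup A'] [AddCommGroup B'] [AddCommGroup C']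
    [Module R A] [Module R B] [Module R C]
    [Module R A'] [Module R B'] [Module R C']
    {f : A →ₗ[R] B} {g : B →ₗ[R] C} {f' : A' →ₗ[R] B'} {g' : B' →ₗ[R] C'}
    (φB : B →ₗ[R] B')
    {hker : ∀ x : B, g x = 0 → g' (φB x) = 0}
    {hrange : ∀ x : B, (∃ y, f y = x) → ∃ y', f' y' = φB x}
    (φA : A →ₗ[R] A')
    (hcomm : ∀ y, f' (φA y) = φB (f y))
    (hB : Function.Injective φB) (hA : Function.Surjective φA) :
    Function.Injective (HmlMap R φB hker hrange) := by
  intro a b hab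
  obtain ⟨⟨x, hx⟩, rfl⟩ := Submodule.Quotient.mk_surjective _ a
  obtain ⟨⟨y, hy⟩, rfl⟩ := Submodule.Quotient.mk_surjective _ b
  rw [HmlMap, Submodule.mapQ_apply, Submodule.mapQ_apply, Submodule.Quotient.eq] at hab
  rw [Submodule.Quotient.eq, Submodule.mem_comap]
  rw [Submodule.mem_comap] at hab
  obtain ⟨y', hy'⟩ := hab
  obtain ⟨z, rfl⟩ := hA y'
  refine ⟨z, ?_⟩
  apply hB
  have : φB (f z) = φB x - φB y := by
    rw [← hcomm z, hy']
    simp [LinearMap.restrict_apply]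
  simpa using this

lemma HmlMap_surjective (R : Type) [CommRing R] {A B C A' B' C' : Type}
    [AddCommGroup A] [AddCommGroup B] [AddCommGroup C]
    [AddCommGroup A'] [AddCommGroup B'] [AddCommGroup C']
    [Module R A] [Module R B] [Module R C]
    [Module R A'] [Module R B'] [Module R C']
    {f : A →ₗ[R] B} {g : B →ₗ[R] C} {f' : A' →ₗ[R] B'} {g' : B' →ₗ[R] C'}
    (φB : B →ₗ[R] B')
    (hker : ∀ x : B, g x = 0 → g' (φB x) = 0)
    (hrange : ∀ x : B, (∃ y, f y = x) → ∃ y', f' y' = φB x)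
    (φC : C →ₗ[R] C')
    (hcomm : ∀ x, g' (φB x) = φC (g x))
    (hB : Function.Surjective φB) (hC : Function.Injective φC) :
    Function.Surjective (HmlMap R φB hker hrange) := by
  intro a
  obtain ⟨⟨x', hx'⟩, rfl⟩ := Submodule.Quotient.mk_surjective _ a
  obtain ⟨x, rfl⟩ := hB x'
  have hgx : g x = 0 := by
    apply hC
    rw [← hcomm x]
    simpa using LinearMap.mem_ker.mp hx'
  refine ⟨Submodule.Quotient.mk ⟨x, LinearMap.mem_ker.mpr hgx⟩, ?_⟩
  rw [HmlMap, Submodule.mapQ_apply]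
  congr 1

lemma step_inj (R : Type) [CommRing R] (A B : SpecSeq R) (F : SpecSeqHom R A B)
    (r : ℕ) (p q : ℤ)
    (hinj : Function.Injective (F.f r p q))
    (hsurj : Function.Surjective (F.f r (p + r) (q - r + 1))) :
    Function.Injective (F.f (r+1) p q) := by
  have hcomm : ∀ y, B.d r (p + r) (q - r + 1) p q (by ring) (by ring)
        (F.f r (p + r) (q - r + 1) y)
      = F.f r p q (A.d r (p + r) (q - r + 1) p q (by ring) (by ring) y) :=
    fun y => LinearMap.congr_fun (F.comm r (p + r) (q - r + 1) p q (by ring) (by ring)) y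
  intro a b hab
  have h := congrArg (B.page r p q) hab
  rw [F.compat, F.compat] at h
  exact (A.page r p q).injective
    (HmlMap_injective R (F.f r p q) (F.f r (p + r) (q - r + 1)) hcomm hinj hsurj h)

lemma step_surj (R : Type) [CommRing R] (A B : SpecSeq R) (F : SpecSeqHom R A B)
    (r : ℕ) (p q : ℤ)
    (hsurj : Function.Surjective (F.f r p q))
    (hinj : Function.Injective (F.f r (p - r) (q + r - 1))) :
    Function.Surjective (F.f (r+1) p q) := by
  have hcomm : ∀ x, B.d r p q (p - r) (q + r - 1) rfl rfl (F.f r p q x)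
      = F.f r (p - r) (q + r - 1) (A.d r p q (p - r) (q + r - 1) rfl rfl x) :=
    fun x => LinearMap.congr_fun (F.comm r p q (p - r) (q + r - 1) rfl rfl) x
  have hcomm2 : ∀ y, B.d r (p + r) (q - r + 1) p q (by ring) (by ring)
        (F.f r (p + r) (q - r + 1) y)
      = F.f r p q (A.d r (p + r) (q - r + 1) p q (by ring) (by ring) y) :=
    fun y => LinearMap.congr_fun (F.comm r (p + r) (q - r + 1) p q (by ring) (by ring)) y
  intro b
  obtain ⟨h, hh⟩ :=
    HmlMap_surjective R (F.f r p q)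
      (fun x hx => by rw [hcomm x, hx, map_zero])
      (fun x hx => by
        obtain ⟨y, rfl⟩ := hx
        exact ⟨F.f r (p + r) (q - r + 1) y, hcomm2 y⟩)
      (F.f r (p - r) (q + r - 1)) hcomm hsurj hinj
      (B.page r p q b)
  refine ⟨(A.page r p q).symm h, ?_⟩
  apply (B.page r p q).injective
  rw [F.compat]
  simpa using hh

lemma triv_inj (R : Type) [CommRing R] (A B : SpecSeq R) (F : SpecSeqHom R A B)
    (r : ℕ) (p q : ℤ) (h : p < 0 ∨ q < 0) : Function.Injective (F.f r p q) := by
  have := A.firstQuad r p q h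
  exact fun a b _ => Subsingleton.elim a b

lemma triv_surj (R : Type) [CommRing R] (A B : SpecSeq R) (F : SpecSeqHom R A B)
    (r : ℕ) (p q : ℤ) (h : p < 0 ∨ q < 0) : Function.Surjective (F.f r p q) := by
  have := B.firstQuad r p q h
  exact fun y => ⟨0, Subsingleton.elim _ _⟩

lemma region (R : Type) [CommRing R] (A B : SpecSeq R) (F : SpecSeqHom R A B) (N : ℤ)
    (h2 : ∀ p q : ℤ, q ≤ N → Function.Bijective (F.f 2 p q)) :
    ∀ r : ℕ, ∀ p q : ℤ,
      (q ≤ N → p + q ≤ N → Function.Injective (F.f (r+2) p q)) ∧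
      (q ≤ N → p + q ≤ N + 1 → Function.Surjective (F.f (r+2) p q)) := by
  intro r
  induction r with
  | zero => exact fun p q => ⟨fun hq _ => (h2 p q hq).1, fun hq _ => (h2 p q hq).2⟩
  | succ r ih =>
    intro p q
    constructor
    · intro hq hpq
      have : r + 1 + 2 = (r + 2) + 1 := by ring
      rw [this]
      apply step_inj
      · exact (ih p q).1 hq hpq
      · by_cases h : q - ((r+2 : ℕ) : ℤ) + 1 < 0
        · exact triv_surj R A B F _ _ _ (Or.inr h)
        · exact (ih _ _).2 (by push_cast at h ⊢; omega) (by push_cast at h ⊢; omega)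
    · intro hq hpq
      have : r + 1 + 2 = (r + 2) + 1 := by ring
      rw [this]
      apply step_surj
      · exact (ih p q).2 hq hpq
      · by_cases h : p - ((r+2 : ℕ) : ℤ) < 0
        · exact triv_inj R A B F _ _ _ (Or.inl h)
        · exact (ih _ _).1 (by push_cast at h ⊢; omega) (by push_cast at h ⊢; omega)

/-- If a morphism of first-quadrant spectral sequences is an isomorphism on the second
page in all bidegrees `(p,q)` with `q ≤ N`, then it is an isomorphism on the limit terms
`E∞_{pq}` for all `(p,q)` with `p + q = N`. -/
theorem spectral_sequence_partial_iso
    (R : Type) [CommRing R] (A B : SpecSeq R) (F : SpecSeqHom R A B) (N : ℤ)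
    (h2 : ∀ p q : ℤ, q ≤ N → Function.Bijective (F.f 2 p q)) :
    ∀ p q : ℤ, p + q = N → Function.Bijective (F.finf p q) := by
  intro p q hpq
  set r : ℕ := N.toNat + 2 with hrdef
  have hN : N ≤ (N.toNat : ℤ) := Int.self_le_toNat N
  have hr : p + q + 1 < (r : ℤ) := by
    have : (r : ℤ) = (N.toNat : ℤ) + 2 := by push_cast [hrdef]; ring
    omega
  have hbij : Function.Bijective (F.f r p q) := by
    by_cases hp : p < 0
    · exact ⟨triv_inj R A B F r p q (Or.inl hp), triv_surj R A B F r p q (Or.inl hp)⟩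
    · push_neg at hp
      obtain ⟨hi, hs⟩ := region R A B F N h2 N.toNat p q
      exact ⟨hi (by omega) (by omega), hs (by omega) (by omega)⟩
  constructor
  · intro a b hab
    obtain ⟨x, rfl⟩ := (A.stab r p q hr).surjective a
    obtain ⟨y, rfl⟩ := (A.stab r p q hr).surjective b
    rw [F.finfCompat r p q hr, F.finfCompat r p q hr] at hab
    rw [hbij.1 ((B.stab r p q hr).injective hab)]
  · intro y
    obtain ⟨z, hz⟩ := hbij.2 ((B.stab r p q hr).symm y)
    exact ⟨A.stab r p q hr z, by rw [F.finfCompat r p q hr, hz]; simp⟩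
end
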